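/- Let G be a just-infinite group generated by a set X ⊆ G, and suppose there exists a word l over X^{±1} with l.prod = 1 but l.reverse.prod ≠ 1. Then G has finite palindromic width with respect to X: there exists k ∈ ℕ such that every element of G is a product of at most k palindromes with respect to X. -/

import Mathlib

/-- An element `g` of a group `G` is a palindrome with respect to `X ⊆ G` if `g` is the
product of some word over `X^{±1}` that equals its own reverse. -/
def IsPalindrome {G : Type*} [Group G] (X : Set G) (g : G) : Prop :=
  ∃ l : List G, (∀ t ∈ l, t ∈ X ∪ X⁻¹) ∧ l.reverse = l ∧ l.prod = g

/-- Let `G` be a just-infinite group generated by `X`, and suppose there is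
a word `l` over `X^{±1}` with `l.prod = 1` but `l.reverse.prod ≠ 1`. Then `G` has finite
palindromic width with respect to `X`. -/
theorem just_infinite_finite_palindromic_width {G : Type*} [Group G]
    (hinf : Infinite G)
    (hji : ∀ N : Subgroup G, N.Normal → N ≠ ⊥ → N.FiniteIndex)
    (X : Set G) (hX : Subgroup.closure X = ⊤)
    (l : List G) (hl : ∀ t ∈ l, t ∈ X ∪ X⁻¹) (hrel : l.prod = 1)
    (hrev : l.reverse.prod ≠ 1) :
    ∃ k : ℕ, ∀ g : G, ∃ ps : List G, ps.length ≤ k ∧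
      (∀ p ∈ ps, IsPalindrome X p) ∧ ps.prod = g := by
  classical
  -- X ∪ X⁻¹ is closed under inverses
  have hinvmem : ∀ t : G, t ∈ X ∪ X⁻¹ → t⁻¹ ∈ X ∪ X⁻¹ := by
    rintro t (h | h)
    · right; simpa using h
    · left; simpa using h
  -- every element of G is a product of a word over X^{±1}
  have hword : ∀ g : G, ∃ w : List G, (∀ t ∈ w, t ∈ X ∪ X⁻¹) ∧ w.prod = g := by
    intro g
    have hg : g ∈ Submonoid.closure (X ∪ X⁻¹) := by
      rw [← Subgroup.closure_toSubmonoid, hX]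
      exact trivial
    exact Submonoid.exists_list_of_mem_closure hg
  -- the subgroup of reversed products of relators
  let R : Subgroup G :=
    { carrier := {g | ∃ w : List G, (∀ t ∈ w, t ∈ X ∪ X⁻¹) ∧ w.prod = 1 ∧ w.reverse.prod = g}
      one_mem' := ⟨[], by simp, by simp, by simp⟩
      mul_mem' := by
        rintro a b ⟨w, hw, hw1, hwr⟩ ⟨v, hv, hv1, hvr⟩
        refine ⟨v ++ w, ?_, ?_, ?_⟩
        · intro t ht
          rcases List.mem_append.1 ht with h | h
          · exact hv t h
          · exact hw t h
        · simp [hv1, hw1]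
        · simp [List.reverse_append, hwr, hvr]
      inv_mem' := by
        rintro x ⟨w, hw, hw1, hwr⟩
        refine ⟨(w.map fun y => y⁻¹).reverse, ?_, ?_, ?_⟩
        · intro t ht
          simp only [List.mem_reverse, List.mem_map] at ht
          obtain ⟨y, hy, rfl⟩ := ht
          exact hinvmem y (hw y hy)
        · rw [← List.prod_inv_reverse, hw1, inv_one]
        · rw [List.reverse_reverse]
          have := List.prod_inv_reverse w.reverse
          simp only [List.map_reverse, List.reverse_reverse] at this
          rw [← this, hwr] }
  have hmemR : ∀ g : G, g ∈ R ↔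
      ∃ w : List G, (∀ t ∈ w, t ∈ X ∪ X⁻¹) ∧ w.prod = 1 ∧ w.reverse.prod = g :=
    fun g => Iff.rfl
  -- R is normal
  have hRnormal : R.Normal := by
    refine ⟨fun n hn g => ?_⟩
    obtain ⟨w, hw, hw1, hwr⟩ := (hmemR n).1 hn
    obtain ⟨u, hu, hup⟩ := hword g
    refine (hmemR _).2 ⟨(u.map fun y => y⁻¹) ++ w ++ u.reverse, ?_, ?_, ?_⟩
    · intro t ht
      rcases List.mem_append.1 ht with h | h
      · rcases List.mem_append.1 h with h | h
        · simp only [List.mem_map] at h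
          obtain ⟨y, hy, rfl⟩ := h
          exact hinvmem y (hu y hy)
        · exact hw t h
      · exact hu t (List.mem_reverse.1 h)
    · have h1 : (u.map fun y => y⁻¹).prod = u.reverse.prod⁻¹ := by
        have := List.prod_inv_reverse u.reverse
        simp only [List.map_reverse, List.reverse_reverse] at this
        rw [this]
      simp [hw1, h1]
    · have h2 : (u.map fun y => y⁻¹).reverse.prod = u.prod⁻¹ := (List.prod_inv_reverse u).symm
      simp [List.reverse_append, hwr, h2, hup, mul_assoc]
  -- R is nontrivial
  have hRne : R ≠ ⊥ := by
    intro hbot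
    apply hrev
    have : l.reverse.prod ∈ R := (hmemR _).2 ⟨l, hl, hrel, rfl⟩
    rw [hbot] at this
    exact this
  have hRfi : R.FiniteIndex := hji R hRnormal hRne
  haveI := hRfi
  haveI : Finite (G ⧸ R) := Subgroup.finite_quotient_of_finiteIndex
  haveI : Fintype (G ⧸ R) := Fintype.ofFinite _
  -- choose words for coset representatives
  choose wd hwdmem hwdprod using hword
  refine ⟨(Finset.univ.sup fun q : G ⧸ R => (wd q.out).length) + 1, fun g => ?_⟩
  set g₀ : G := (QuotientGroup.mk g : G ⧸ R).out with hg₀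
  have hcoset : g₀⁻¹ * g ∈ R := by
    have h1 : (QuotientGroup.mk g₀ : G ⧸ R) = QuotientGroup.mk g := Quotient.out_eq _
    exact (QuotientGroup.eq).1 h1
  obtain ⟨w, hw, hw1, hwr⟩ := (hmemR _).1 hcoset
  refine ⟨wd g₀ ++ [g₀⁻¹ * g], ?_, ?_, ?_⟩
  · rw [List.length_append, List.length_singleton]
    have : (wd g₀).length ≤ Finset.univ.sup fun q : G ⧸ R => (wd q.out).length :=
      Finset.le_sup (f := fun q : G ⧸ R => (wd q.out).length) (Finset.mem_univ (QuotientGroup.mk g))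
    omega
  · intro p hp
    rcases List.mem_append.1 hp with h | h
    · -- a single letter is a palindrome
      exact ⟨[p], by simpa using hwdmem g₀ p h, by simp, by simp⟩
    · rw [List.mem_singleton] at h
      subst h
      refine ⟨w ++ w.reverse, ?_, ?_, ?_⟩
      · intro t ht
        rcases List.mem_append.1 ht with h | h
        · exact hw t h
        · exact hw t (List.mem_reverse.1 h)
      · simp [List.reverse_append]
      · simp [hw1, hwr]
  · simp [hwdprod g₀]
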